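/- (Paraphrase of Lemma 2 of FOCS) Let I_i be a critical interval, i.e., an interval attaining the maximum aggregated power p_i = max_k p_k in an optimal schedule, and let I_{i'} be any interval with p_{i'} < p_i. Then no positive amount of scheduled charge can be feasibly moved from I_i to I_{i'}: for every job j available in both I_i and I_{i'} with e_{i,j} > 0, we must have e_{i',j} = e_{i',j}^max. -/
import Mathlib


/-- A schedule is feasible if it is nonnegative, charges only in available
intervals, respects the per-interval power caps, and meets all demands. -/
def Feasible (n m : ℕ) (A : Fin n → Fin m → Bool) (L : Fin m → ℝ)
    (pmax e : Fin n → ℝ) (E : Fin m → Fin n → ℝ) : Prop :=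
  (∀ i j, 0 ≤ E i j) ∧ (∀ i j, A j i = false → E i j = 0) ∧
  (∀ i j, E i j ≤ pmax j * L i) ∧ (∀ j, e j ≤ ∑ i, E i j)

/-- Aggregated power in interval `i`. -/
noncomputable def power (n m : ℕ) (L : Fin m → ℝ) (E : Fin m → Fin n → ℝ) (i : Fin m) : ℝ :=
  (∑ j, E i j) / L i

/-- Weighted quadratic objective. -/
noncomputable def objF (n m : ℕ) (L : Fin m → ℝ) (E : Fin m → Fin n → ℝ) : ℝ :=
  ∑ i, L i * (power n m L E i) ^ 2

/-- Lemma 2 of FOCS: no positive charge can be feasibly moved from a critical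
interval `i` to a strictly lower-power interval `i'`; in particular any job with
positive charge in `i` available in `i'` is at its cap in `i'`. -/
theorem no_move_from_critical (n m : ℕ) (A : Fin n → Fin m → Bool) (L : Fin m → ℝ)
    (pmax e : Fin n → ℝ) (hL : ∀ i, 0 < L i) (hp : ∀ j, 0 < pmax j)
    (he : ∀ j, 0 ≤ e j)
    (E : Fin m → Fin n → ℝ) (hE : Feasible n m A L pmax e E)
    (hopt : ∀ E', Feasible n m A L pmax e E' → objF n m L E ≤ objF n m L E')
    (i : Fin m) (hcrit : ∀ k, power n m L E k ≤ power n m L E i)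
    (i' : Fin m) (hlt : power n m L E i' < power n m L E i) :
    (¬ ∃ δ : ℝ, ∃ j : Fin n, 0 < δ ∧ A j i = true ∧ A j i' = true ∧
        δ ≤ E i j ∧ E i' j + δ ≤ pmax j * L i') ∧
    (∀ j : Fin n, A j i = true → A j i' = true → 0 < E i j →
        E i' j = pmax j * L i') := by
  have hii' : i ≠ i' := by
    intro h; rw [h] at hlt; exact lt_irrefl _ hlt
  have hLi := hL i
  have hLi' := hL i'
  set pi := power n m L E i with hpi
  set pi' := power n m L E i' with hpi'
  set c : ℝ := 1 / L i + 1 / L i' with hc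
  have hc0 : 0 < c := by positivity
  have key : ¬ ∃ δ : ℝ, ∃ j : Fin n, 0 < δ ∧ A j i = true ∧ A j i' = true ∧
      δ ≤ E i j ∧ E i' j + δ ≤ pmax j * L i' := by
    rintro ⟨δ, j, hδ, hAi, hAi', hδE, hcap⟩
    set ε := min δ ((pi - pi') / c) with hεdef
    have hε0 : 0 < ε := lt_min hδ (div_pos (sub_pos.2 hlt) hc0)
    have hεδ : ε ≤ δ := min_le_left _ _
    have hεc : ε * c ≤ pi - pi' := by
      have h := min_le_right δ ((pi - pi') / c)
      rw [← hεdef] at h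
      calc ε * c ≤ ((pi - pi') / c) * c := by
            exact mul_le_mul_of_nonneg_right h hc0.le
        _ = pi - pi' := by field_simp
    set E' : Fin m → Fin n → ℝ := fun k l =>
      if k = i ∧ l = j then E i j - ε
      else if k = i' ∧ l = j then E i' j + ε
      else E k l with hE'def
    have hpt : ∀ k l, E' k l = E k l + (if k = i ∧ l = j then -ε else 0)
        + (if k = i' ∧ l = j then ε else 0) := by
      intro k l
      by_cases h1 : k = i ∧ l = j
      · obtain ⟨hk, hl⟩ := h1
        subst hk; subst hl
        simp [hE'def, hii', sub_eq_add_neg]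
      · by_cases h2 : k = i' ∧ l = j
        · obtain ⟨hk, hl⟩ := h2
          subst hk; subst hl
          simp [hE'def, Ne.symm hii']
        · simp [hE'def, h1, h2]
    obtain ⟨h1, h2, h3, h4⟩ := hE
    have hrow : ∀ k, ∑ l, E' k l = (∑ l, E k l)
        + (if k = i then -ε else 0) + (if k = i' then ε else 0) := by
      intro k
      simp only [hpt]
      rw [Finset.sum_add_distrib, Finset.sum_add_distrib]
      congr 1
      · congr 1
        by_cases hk : k = i <;> simp [hk]
      · by_cases hk : k = i' <;> simp [hk]
    have hcol : ∀ l, ∑ k, E' k l = ∑ k, E k l := by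
      intro l
      simp only [hpt]
      rw [Finset.sum_add_distrib, Finset.sum_add_distrib]
      by_cases hl : l = j
      · simp [hl]
      · simp [hl]
    have feas : Feasible n m A L pmax e E' := by
      refine ⟨?_, ?_, ?_, ?_⟩
      · intro k l
        rw [hpt]
        by_cases hk1 : k = i ∧ l = j
        · have hk2 : ¬ (k = i' ∧ l = j) := by
            rintro ⟨hk, -⟩; exact hii' (hk1.1.symm.trans hk)
          simp only [if_pos hk1, if_neg hk2]
          have := hδE
          rw [hk1.1, hk1.2]; linarith
        · by_cases hk2 : k = i' ∧ l = j
          · simp only [if_neg hk1, if_pos hk2]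
            have := h1 k l
            linarith [hε0.le]
          · simp only [if_neg hk1, if_neg hk2]
            simpa using h1 k l
      · intro k l hAf
        rw [hpt]
        have hk1 : ¬ (k = i ∧ l = j) := by
          rintro ⟨hk, hl⟩; rw [hk, hl] at hAf; rw [hAi] at hAf; simp at hAf
        have hk2 : ¬ (k = i' ∧ l = j) := by
          rintro ⟨hk, hl⟩; rw [hk, hl] at hAf; rw [hAi'] at hAf; simp at hAf
        simp only [if_neg hk1, if_neg hk2, add_zero]
        exact h2 k l hAf
      · intro k l
        rw [hpt]
        by_cases hk1 : k = i ∧ l = j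
        · have hk2 : ¬ (k = i' ∧ l = j) := by
            rintro ⟨hk, -⟩; exact hii' (hk1.1.symm.trans hk)
          simp only [if_pos hk1, if_neg hk2, add_zero]
          have := h3 k l
          linarith [hε0.le]
        · by_cases hk2 : k = i' ∧ l = j
          · simp only [if_neg hk1, if_pos hk2, add_zero]
            rw [hk2.1, hk2.2]
            linarith
          · simp only [if_neg hk1, if_neg hk2, add_zero]
            simpa using h3 k l
      · intro l
        rw [hcol]
        exact h4 l
    have hq_i : power n m L E' i = pi - ε / L i := by
      rw [power, hrow i, if_pos rfl, if_neg hii', hpi, power]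
      ring
    have hq_i' : power n m L E' i' = pi' + ε / L i' := by
      rw [power, hrow i', if_neg (Ne.symm hii'), if_pos rfl, hpi', power]
      ring
    have hpow_other : ∀ k, k ≠ i → k ≠ i' → power n m L E' k = power n m L E k := by
      intro k hk1 hk2
      rw [power, hrow k, if_neg hk1, if_neg hk2, power]
      ring
    have hobj : objF n m L E' = objF n m L E
        + (L i * ((pi - ε / L i) ^ 2 - pi ^ 2)
          + L i' * ((pi' + ε / L i') ^ 2 - pi' ^ 2)) := by
      have hdiff : ∀ k, L k * (power n m L E' k) ^ 2
          = L k * (power n m L E k) ^ 2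
          + (if k = i then L i * ((pi - ε / L i) ^ 2 - pi ^ 2) else 0)
          + (if k = i' then L i' * ((pi' + ε / L i') ^ 2 - pi' ^ 2) else 0) := by
        intro k
        by_cases hk1 : k = i
        · subst hk1
          rw [if_pos rfl, if_neg hii', hq_i, ← hpi]
          ring
        · by_cases hk2 : k = i'
          · subst hk2
            rw [if_neg hk1, if_pos rfl, hq_i', ← hpi']
            ring
          · rw [if_neg hk1, if_neg hk2, hpow_other k hk1 hk2]
            ring
      rw [objF, objF]
      simp only [hdiff]
      rw [Finset.sum_add_distrib, Finset.sum_add_distrib]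
      simp only [Finset.sum_ite_eq', Finset.mem_univ, if_true]
      ring
    have hD : L i * ((pi - ε / L i) ^ 2 - pi ^ 2)
        + L i' * ((pi' + ε / L i') ^ 2 - pi' ^ 2)
        = ε * (ε * c - 2 * (pi - pi')) := by
      rw [hc]
      field_simp
      ring
    have hDneg : ε * (ε * c - 2 * (pi - pi')) < 0 :=
      mul_neg_of_pos_of_neg hε0 (by linarith)
    have := hopt E' feas
    rw [hobj, hD] at this
    linarith
  refine ⟨key, ?_⟩
  intro j hAi hAi' hpos
  by_contra hne
  have hle := hE.2.2.1 i' j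
  have hlt2 : E i' j < pmax j * L i' := lt_of_le_of_ne hle hne
  exact key ⟨min (E i j) (pmax j * L i' - E i' j), j,
    lt_min hpos (sub_pos.2 hlt2), hAi, hAi', min_le_left _ _,
    by linarith [min_le_right (E i j) (pmax j * L i' - E i' j)]⟩
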